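/- The only bounded clopen subset of Erdős space (𝔈, τ) is the empty set; equivalently, every nonempty clopen subset of 𝔈 is unbounded in norm. -/

import Mathlib

noncomputable section

open scoped ENNReal

/-- The ambient Hilbert space `ℓ²` of real square-summable sequences. -/
abbrev ellTwo : Type := lp (fun _ : ℕ => ℝ) 2

/-- Erdős space `𝔈`: the additive subgroup of `ℓ²` consisting of the sequences
all of whose coordinates are rational. -/
def Erdos : AddSubgroup ellTwo where
  carrier := {x | ∀ k, ∃ q : ℚ, (x : ℕ → ℝ) k = (q : ℝ)}
  add_mem' := by
    intro a b ha hb k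
    obtain ⟨p, hp⟩ := ha k
    obtain ⟨q, hq⟩ := hb k
    exact ⟨p + q, by rw [lp.coeFn_add]; simp [hp, hq]⟩
  zero_mem' := fun k => ⟨0, by simp⟩
  neg_mem' := by
    intro a ha k
    obtain ⟨p, hp⟩ := ha k
    exact ⟨-p, by rw [lp.coeFn_neg]; simp [hp]⟩

/-- Erdős space as a type (with the subspace topology and norm inherited from `ℓ²`). -/
abbrev ErdosSpace : Type := ↥Erdos

/-- The coordinates of a point of Erdős space (indexed from `0`, so that the
coordinate `x_k` of the paper is `coords x (k-1)`). -/
def coords (x : ErdosSpace) : ℕ → ℝ := ((x : ellTwo) : ℕ → ℝ)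

/-- `mExists x α` says that `m_{x,α}` exists, i.e. some finite initial sum of squares
of coordinates exceeds `α` (here `m` counts how many initial coordinates are taken). -/
def mExists (x : ErdosSpace) (α : ℝ) : Prop :=
  ∃ m : ℕ, α < Real.sqrt (∑ k ∈ Finset.range m, (coords x k) ^ 2)

/-- `mIndex x α` is the least `m` such that `√(∑_{k<m} x_k²) > α` (and `0` if none exists);
this corresponds to `m_{x,α}` of the paper. -/
def mIndex (x : ErdosSpace) (α : ℝ) : ℕ :=
  sInf {m : ℕ | α < Real.sqrt (∑ k ∈ Finset.range m, (coords x k) ^ 2)}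

/-- The set `A_{α,β}`: those `x` for which either `m_{x,α}` exists and every coordinate
beyond the first `m_{x,α}` ones has absolute value `< β`, or `m_{x,α}` does not exist. -/
def A (α β : ℝ) : Set ErdosSpace :=
  {x | (mExists x α ∧ ∀ l, mIndex x α ≤ l → |coords x l| < β) ∨ ¬mExists x α}


namespace ErdosUnbounded

lemma two_toReal : (2 : ℝ≥0∞).toReal = 2 := by simp

lemma two_toReal_pos : 0 < (2 : ℝ≥0∞).toReal := by rw [two_toReal]; norm_num

/-- A single rational coordinate, as an element of Erdős space. -/
def sing (n : ℕ) (q : ℚ) : ErdosSpace :=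
  ⟨lp.single 2 n (q : ℝ), by
    intro k
    by_cases h : k = n
    · subst h; exact ⟨q, lp.single_apply_self _ _ _⟩
    · exact ⟨0, by rw [lp.single_apply_ne 2 n _ h]; simp⟩⟩

@[simp] lemma coe_sing (n : ℕ) (q : ℚ) :
    ((sing n q : ErdosSpace) : ellTwo) = lp.single 2 n (q : ℝ) := rfl

lemma sing_zero (n : ℕ) : sing n (0 : ℚ) = 0 := by
  apply Subtype.ext
  rw [coe_sing]
  apply lp.ext
  funext j
  by_cases h : j = n
  · subst h
    rw [lp.single_apply_self]
    simp
  · rw [lp.single_apply_ne 2 n _ h]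
    simp

lemma sing_sub (n : ℕ) (a b : ℚ) : sing n a - sing n b = sing n (a - b) := by
  apply Subtype.ext
  rw [AddSubgroup.coe_sub, coe_sing, coe_sing, coe_sing]
  apply lp.ext
  funext j
  rw [lp.coeFn_sub, Pi.sub_apply]
  by_cases h : j = n
  · subst h
    rw [lp.single_apply_self, lp.single_apply_self, lp.single_apply_self]
    push_cast; ring
  · rw [lp.single_apply_ne 2 n _ h, lp.single_apply_ne 2 n _ h, lp.single_apply_ne 2 n _ h]
    simp

lemma norm_sing (n : ℕ) (q : ℚ) : ‖sing n q‖ = |(q : ℝ)| := by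
  rw [AddSubgroup.coe_norm, coe_sing]
  have := lp.norm_single (E := fun _ : ℕ => ℝ) (p := 2) (by norm_num) n (q : ℝ)
  rw [this, Real.norm_eq_abs]

/-- The predicate on a pair of rationals `(r, s)` used for the inductive construction:
adding `r` in coordinate `n` stays in `S`, adding `s` leaves `S`, and `|s - r| < 2⁻ⁿ`. -/
def Good (S : Set ErdosSpace) (x : ErdosSpace) (n : ℕ) (rs : ℚ × ℚ) : Prop :=
  x + sing n rs.1 ∈ S ∧ x + sing n rs.2 ∉ S ∧ |(rs.2 : ℝ) - (rs.1 : ℝ)| < (1 / 2) ^ n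

lemma good_exists {S : Set ErdosSpace} {M : ℝ} (hM : ∀ z ∈ S, ‖z‖ ≤ M)
    {x : ErdosSpace} (hx : x ∈ S) (n : ℕ) : ∃ rs : ℚ × ℚ, Good S x n rs := by
  set T : Set ℝ := {t | ∃ q : ℚ, (q : ℝ) = t ∧ 0 ≤ q ∧ x + sing n q ∈ S} with hT
  have hT0 : (0 : ℝ) ∈ T := ⟨0, by norm_num, le_refl 0, by rwa [sing_zero, add_zero]⟩
  have hTbdd : BddAbove T := by
    refine ⟨M + ‖x‖, ?_⟩
    rintro t ⟨q, rfl, hq0, hqS⟩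
    have h2 : sing n q = (x + sing n q) - x := by abel
    calc (q : ℝ) ≤ |(q : ℝ)| := le_abs_self _
      _ = ‖sing n q‖ := (norm_sing n q).symm
      _ = ‖(x + sing n q) - x‖ := by rw [← h2]
      _ ≤ ‖x + sing n q‖ + ‖x‖ := norm_sub_le _ _
      _ ≤ M + ‖x‖ := by gcongr; exact hM _ hqS
  set b := sSup T with hb
  have hpow : (0 : ℝ) < (1 / 2) ^ n := by positivity
  have hlt : b - (1 / 2) ^ n / 2 < b := by linarith
  obtain ⟨t, htT, htb⟩ := exists_lt_of_lt_csSup ⟨0, hT0⟩ hlt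
  obtain ⟨r, rfl, hr0, hrS⟩ := htT
  have hrb : (r : ℝ) ≤ b := le_csSup hTbdd ⟨r, rfl, hr0, hrS⟩
  have hbr : b < (r : ℝ) + (1 / 2) ^ n := by linarith
  obtain ⟨s, hbs, hs⟩ := exists_rat_btwn hbr
  have h0b : (0 : ℝ) ≤ b := le_csSup hTbdd hT0
  refine ⟨(r, s), hrS, ?_, ?_⟩
  · intro hmem
    have h0s : (0 : ℚ) ≤ s := by
      have : (0 : ℝ) ≤ (s : ℝ) := le_trans h0b hbs.le
      exact_mod_cast this
    have : (s : ℝ) ∈ T := ⟨s, rfl, h0s, hmem⟩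
    have := le_csSup hTbdd this
    linarith
  · simp only
    rw [abs_of_nonneg (by linarith)]
    linarith

open Classical in
/-- The chosen pair of rationals at a given stage. -/
def step (S : Set ErdosSpace) (x : ErdosSpace) (n : ℕ) : ℚ × ℚ :=
  if h : ∃ rs : ℚ × ℚ, Good S x n rs then h.choose else 0

lemma step_spec {S : Set ErdosSpace} {x : ErdosSpace} {n : ℕ}
    (h : ∃ rs : ℚ × ℚ, Good S x n rs) : Good S x n (step S x n) := by
  unfold step
  split
  · exact Exists.choose_spec _
  · exact absurd h ‹_›

/-- The inductively constructed points of `S`. -/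
def pt (S : Set ErdosSpace) : ℕ → ErdosSpace
  | 0 => 0
  | n + 1 => pt S n + sing n (step S (pt S n) n).1

lemma pt_mem {S : Set ErdosSpace} {M : ℝ} (hM : ∀ z ∈ S, ‖z‖ ≤ M)
    (h0 : (0 : ErdosSpace) ∈ S) : ∀ n, pt S n ∈ S := by
  intro n
  induction n with
  | zero => exact h0
  | succ n ih =>
    have hex := step_spec (good_exists hM ih n)
    exact hex.1

lemma good_pt {S : Set ErdosSpace} {M : ℝ} (hM : ∀ z ∈ S, ‖z‖ ≤ M)
    (h0 : (0 : ErdosSpace) ∈ S) (n : ℕ) : Good S (pt S n) n (step S (pt S n) n) :=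
  step_spec (good_exists hM (pt_mem hM h0 n) n)

/-- Key lemma: a clopen bounded subset of Erdős space containing `0` yields a
contradiction. -/
lemma key {S : Set ErdosSpace} (hS : IsClopen S) {M : ℝ}
    (hM : ∀ z ∈ S, ‖z‖ ≤ M) (h0 : (0 : ErdosSpace) ∈ S) : False := by
  classical
  -- the sequence of chosen rationals
  set rr : ℕ → ℚ := fun n => (step S (pt S n) n).1 with hrr
  set f : ℕ → ℝ := fun k => ((rr k : ℚ) : ℝ) with hf
  -- the coordinates of `pt S n`
  have hcoe : ∀ n, ((pt S n : ErdosSpace) : ellTwo)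
      = ∑ k ∈ Finset.range n, lp.single 2 k (f k) := by
    intro n
    induction n with
    | zero => simp [pt]
    | succ n ih =>
      rw [Finset.sum_range_succ, ← ih]
      rfl
  have hMnn : 0 ≤ M := le_trans (norm_nonneg _) (hM 0 h0)
  -- uniform bound for the partial sums of squares
  have hbound : ∀ n, ∑ k ∈ Finset.range n, ‖f k‖ ^ (2 : ℝ≥0∞).toReal ≤ M ^ (2 : ℝ≥0∞).toReal := by
    intro n
    have h1 := lp.norm_sum_single (E := fun _ : ℕ => ℝ) two_toReal_pos f (Finset.range n)
    rw [← hcoe n] at h1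
    rw [← h1]
    have h2 : ‖((pt S n : ErdosSpace) : ellTwo)‖ ≤ M := by
      rw [← AddSubgroup.coe_norm]
      exact hM _ (pt_mem hM h0 n)
    exact Real.rpow_le_rpow (norm_nonneg _) h2 two_toReal_pos.le
  have hsummable : Summable fun k => ‖f k‖ ^ (2 : ℝ≥0∞).toReal :=
    summable_of_sum_range_le (fun k => Real.rpow_nonneg (norm_nonneg _) _) hbound
  have hmem : Memℓp f 2 := memℓp_gen hsummable
  set y0 : ellTwo := ⟨f, hmem⟩ with hy0
  have hy0app : ∀ k, (y0 : ℕ → ℝ) k = f k := fun _ => rfl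
  set y : ErdosSpace := ⟨y0, fun k => ⟨rr k, rfl⟩⟩ with hy
  -- `pt S n → y`
  have hnorm_tend : Filter.Tendsto (fun n => ‖pt S n - y‖) Filter.atTop (nhds 0) := by
    have hcompl : ∀ n, ‖pt S n - y‖ ^ (2 : ℝ≥0∞).toReal = ‖y0‖ ^ (2 : ℝ≥0∞).toReal - ∑ k ∈ Finset.range n, ‖f k‖ ^ (2 : ℝ≥0∞).toReal := by
      intro n
      have h3 := lp.norm_compl_sum_single (E := fun _ : ℕ => ℝ) two_toReal_pos y0 (Finset.range n)
      have h4 : (∑ k ∈ Finset.range n, lp.single 2 k ((y0 : ℕ → ℝ) k))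
          = ((pt S n : ErdosSpace) : ellTwo) := by
        rw [hcoe n]
      rw [h4] at h3
      have hyy0 : ((y : ErdosSpace) : ellTwo) = y0 := rfl
      have h5 : ‖pt S n - y‖ = ‖y0 - ((pt S n : ErdosSpace) : ellTwo)‖ := by
        rw [AddSubgroup.coe_norm, AddSubgroup.coe_sub, hyy0, ← norm_neg, neg_sub]
      rw [h5, h3]
    have hhs := (lp.hasSum_norm (E := fun _ : ℕ => ℝ) two_toReal_pos y0).tendsto_sum_nat
    have htendsq : Filter.Tendsto (fun n => ‖pt S n - y‖ ^ (2 : ℝ≥0∞).toReal)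
        Filter.atTop (nhds 0) := by
      have h6 : Filter.Tendsto
          (fun n => ‖y0‖ ^ (2 : ℝ≥0∞).toReal
            - ∑ k ∈ Finset.range n, ‖f k‖ ^ (2 : ℝ≥0∞).toReal)
          Filter.atTop (nhds (‖y0‖ ^ (2 : ℝ≥0∞).toReal - ‖y0‖ ^ (2 : ℝ≥0∞).toReal)) :=
        tendsto_const_nhds.sub hhs
      rw [sub_self] at h6
      exact h6.congr fun n => (hcompl n).symm
    have hsqrt : ∀ n, ‖pt S n - y‖ = Real.sqrt (‖pt S n - y‖ ^ (2 : ℝ≥0∞).toReal) := by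
      intro n
      have e : ‖pt S n - y‖ ^ (2 : ℝ≥0∞).toReal = ‖pt S n - y‖ ^ (2 : ℕ) := by
        rw [two_toReal, ← Real.rpow_natCast (‖pt S n - y‖) 2]
        norm_num
      rw [e, Real.sqrt_sq (norm_nonneg _)]
    have := (Real.continuous_sqrt.tendsto 0).comp htendsq
    simp only [Real.sqrt_zero, Function.comp] at this
    exact this.congr fun n => (hsqrt n).symm
  have hy_tend : Filter.Tendsto (fun n => pt S n) Filter.atTop (nhds y) := by
    rw [tendsto_iff_norm_sub_tendsto_zero]
    exact hnorm_tend
  have hyS : y ∈ S :=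
    hS.isClosed.mem_of_tendsto hy_tend (Filter.Eventually.of_forall (pt_mem hM h0))
  -- the outside approximants
  set w : ℕ → ErdosSpace := fun n => pt S n + sing n (step S (pt S n) n).2 with hw
  have hwnot : ∀ n, w n ∉ S := fun n => (good_pt hM h0 n).2.1
  have hw_tend : Filter.Tendsto w Filter.atTop (nhds y) := by
    rw [tendsto_iff_norm_sub_tendsto_zero]
    have hle : ∀ n, ‖w n - y‖ ≤ ‖pt S (n + 1) - y‖ + (1 / 2) ^ n := by
      intro n
      have hdecomp : w n - y
          = (pt S (n + 1) - y) + (sing n ((step S (pt S n) n).2) - sing n (rr n)) := by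
        have hstep : pt S (n + 1) = pt S n + sing n (rr n) := rfl
        rw [hw, hstep]
        beta_reduce
        abel
      rw [hdecomp]
      refine (norm_add_le _ _).trans ?_
      gcongr
      rw [sing_sub, norm_sing]
      have := (good_pt hM h0 n).2.2
      calc |(((step S (pt S n) n).2 - rr n : ℚ) : ℝ)|
          = |((step S (pt S n) n).2 : ℝ) - ((rr n : ℚ) : ℝ)| := by push_cast; ring_nf
        _ ≤ (1 / 2) ^ n := le_of_lt this
    have hg : Filter.Tendsto (fun n => ‖pt S (n + 1) - y‖ + (1 / 2 : ℝ) ^ n)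
        Filter.atTop (nhds 0) := by
      have h1 : Filter.Tendsto (fun n => ‖pt S (n + 1) - y‖) Filter.atTop (nhds 0) :=
        hnorm_tend.comp (Filter.tendsto_add_atTop_nat 1)
      have h2 : Filter.Tendsto (fun n : ℕ => (1 / 2 : ℝ) ^ n) Filter.atTop (nhds 0) :=
        tendsto_pow_atTop_nhds_zero_of_lt_one (by norm_num) (by norm_num)
      simpa using h1.add h2
    exact squeeze_zero (fun n => norm_nonneg _) hle hg
  have hev : ∀ᶠ n in Filter.atTop, w n ∈ S :=
    hw_tend.eventually (hS.isOpen.mem_nhds hyS)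
  obtain ⟨n, hn⟩ := hev.exists
  exact hwnot n hn

end ErdosUnbounded


/-- The only bounded clopen subset of Erdős space is the empty set. -/
theorem bounded_clopen_eq_empty (U : Set ErdosSpace) (hU : IsClopen U)
    (hbdd : ∃ M : ℝ, 0 < M ∧ ∀ x ∈ U, ‖x‖ ≤ M) : U = ∅ := by
  rw [Set.eq_empty_iff_forall_notMem]
  intro x hx
  obtain ⟨M, hMpos, hMb⟩ := hbdd
  set S : Set ErdosSpace := (fun y : ErdosSpace => y + x) ⁻¹' U with hSdef
  have hScl : IsClopen S := hU.preimage (continuous_id.add continuous_const)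
  have hSbdd : ∀ z ∈ S, ‖z‖ ≤ M + ‖x‖ := by
    intro z hz
    have h1 : z = (z + x) - x := by abel
    calc ‖z‖ = ‖(z + x) - x‖ := by rw [← h1]
      _ ≤ ‖z + x‖ + ‖x‖ := norm_sub_le _ _
      _ ≤ M + ‖x‖ := by gcongr; exact hMb _ hz
  have h0S : (0 : ErdosSpace) ∈ S := by
    show (0 : ErdosSpace) + x ∈ U
    rwa [zero_add]
  exact (ErdosUnbounded.key hScl hSbdd h0S).elim
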